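/- For every integer d with 1 ≤ d ≤ 2(q−1), the evaluations {ev(M) : M ∈ A^d} form a basis of the projective Reed–Muller code PRM_d(q,2); in particular, PRM_d(q,2) has dimension |A^d|. -/

import Mathlib

open MvPolynomial

/-- The fixed representatives of the points of the projective plane over `F`:
the leftmost nonzero coordinate equals 1. -/
def stdRep (F : Type*) [Field F] : Set (Fin 3 → F) :=
  {v | v 0 = 1 ∨ (v 0 = 0 ∧ v 1 = 1) ∨ (v 0 = 0 ∧ v 1 = 0 ∧ v 2 = 1)}

/-- The evaluation map at the fixed representatives. -/
noncomputable def ev (F : Type*) [Field F] :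
    MvPolynomial (Fin 3) F →ₗ[F] (stdRep F → F) :=
  LinearMap.pi fun Q => (aeval (Q : Fin 3 → F)).toLinearMap

/-- The projective Reed–Muller code of degree `d` over the projective plane. -/
noncomputable def PRM (F : Type*) [Field F] (d : ℕ) : Submodule F (stdRep F → F) :=
  (homogeneousSubmodule (Fin 3) F d).map (ev F)

/-- The set of monomials `A₁^d`. -/
def A1 (F : Type*) [Field F] (q d : ℕ) : Set (MvPolynomial (Fin 3) F) :=
  {M | ∃ a0 a1 a2 : ℕ, 0 < a0 ∧ a0 + a1 + a2 = d ∧ a1 ≤ q - 1 ∧ a2 ≤ q - 1 ∧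
    M = X 0 ^ a0 * X 1 ^ a1 * X 2 ^ a2}

/-- The set of monomials `A₂^d`. -/
def A2 (F : Type*) [Field F] (q d : ℕ) : Set (MvPolynomial (Fin 3) F) :=
  {M | ∃ a1 a2 : ℕ, 0 < a1 ∧ a1 + a2 = d ∧ a2 ≤ q - 1 ∧ M = X 1 ^ a1 * X 2 ^ a2}

/-- The set of monomials `A₃^d`. -/
def A3 (F : Type*) [Field F] (d : ℕ) : Set (MvPolynomial (Fin 3) F) :=
  {X 2 ^ d}

namespace PRMaux

def red (q a : ℕ) : ℕ := if a = 0 then 0 else (a - 1) % (q - 1) + 1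

lemma red_le (q a : ℕ) : red q a ≤ a := by
  unfold red; split
  · omega
  · have := Nat.mod_le (a - 1) (q - 1); omega

lemma red_le_sub_one {q : ℕ} (hq : 2 ≤ q) (a : ℕ) : red q a ≤ q - 1 := by
  unfold red; split
  · omega
  · have : (a - 1) % (q - 1) < q - 1 := Nat.mod_lt _ (by omega)
    omega

lemma red_dvd (q a : ℕ) : (q - 1) ∣ a - red q a := by
  unfold red; split
  · simp_all
  · have h := Nat.div_add_mod (a - 1) (q - 1)
    exact ⟨(a - 1) / (q - 1), by omega⟩

lemma red_eq_zero {q a : ℕ} (h : red q a = 0) : a = 0 := by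
  unfold red at h; split at h <;> omega

lemma pow_red {F : Type*} [Field F] [Fintype F] {q : ℕ} (hq : Fintype.card F = q)
    {a b : ℕ} (hle : a ≤ b) (hdvd : (q - 1) ∣ (b - a)) (hz : a = 0 → b = 0) (y : F) :
    y ^ b = y ^ a := by
  obtain ⟨k, hk⟩ := hdvd
  have hb : b = a + (q - 1) * k := by omega
  subst hb
  rcases eq_or_ne y 0 with rfl | hy
  · rcases Nat.eq_zero_or_pos a with rfl | ha
    · rw [hz rfl]
    · rw [zero_pow (by omega), zero_pow (by omega)]
  · rw [pow_add, pow_mul, ← hq, FiniteField.pow_card_sub_one_eq_one y hy, one_pow, mul_one]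

lemma finsupp_ext3 {m m' : Fin 3 →₀ ℕ} (h0 : m 0 = m' 0) (h1 : m 1 = m' 1)
    (h2 : m 2 = m' 2) : m = m' := by
  ext i
  fin_cases i
  · exact h0
  · exact h1
  · exact h2

lemma eval_monomial_three {F : Type*} [CommRing F] (v : Fin 3 → F) (m : Fin 3 →₀ ℕ) :
    eval v (monomial m (1:F)) = v 0 ^ m 0 * v 1 ^ m 1 * v 2 ^ m 2 := by
  rw [eval_monomial, one_mul, Finsupp.prod_fintype _ _ (fun i => pow_zero _)]
  exact Fin.prod_univ_three _

lemma XXX_eq_monomial {F : Type*} [CommRing F] (a0 a1 a2 : ℕ) :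
    (X 0 ^ a0 * X 1 ^ a1 * X 2 ^ a2 : MvPolynomial (Fin 3) F)
      = monomial (Finsupp.single 0 a0 + Finsupp.single 1 a1 + Finsupp.single 2 a2) 1 := by
  simp [X_pow_eq_monomial, monomial_mul]

lemma triple_apply0 (a0 a1 a2 : ℕ) :
    ((Finsupp.single 0 a0 + Finsupp.single 1 a1 + Finsupp.single 2 a2 : Fin 3 →₀ ℕ)) 0 = a0 := by
  simp [Finsupp.single_apply]

lemma triple_apply1 (a0 a1 a2 : ℕ) :
    ((Finsupp.single 0 a0 + Finsupp.single 1 a1 + Finsupp.single 2 a2 : Fin 3 →₀ ℕ)) 1 = a1 := by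
  simp [Finsupp.single_apply]

lemma triple_apply2 (a0 a1 a2 : ℕ) :
    ((Finsupp.single 0 a0 + Finsupp.single 1 a1 + Finsupp.single 2 a2 : Fin 3 →₀ ℕ)) 2 = a2 := by
  simp [Finsupp.single_apply]

lemma degree_three (m : Fin 3 →₀ ℕ) : m.degree = m 0 + m 1 + m 2 := by
  rw [Finsupp.degree, ← Fin.sum_univ_three (fun i => m i)]
  exact Finset.sum_subset (Finset.subset_univ _) (fun i _ hi => Finsupp.notMem_support_iff.mp hi)

lemma ev_apply {F : Type*} [Field F] (p : MvPolynomial (Fin 3) F) (v : stdRep F) :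
    ev F p v = eval (v : Fin 3 → F) p := by
  simp [ev, aeval_def]

end PRMaux

namespace PRMaux

def Cond (q d : ℕ) (m : Fin 3 →₀ ℕ) : Prop :=
  m 0 + m 1 + m 2 = d ∧ (0 < m 0 → m 1 ≤ q - 1 ∧ m 2 ≤ q - 1) ∧
    (m 0 = 0 → 0 < m 1 → m 2 ≤ q - 1)

def condSub (F : Type*) [Field F] (q d : ℕ) : Submodule F (MvPolynomial (Fin 3) F) where
  carrier := {p | ∀ m ∈ p.support, Cond q d m}
  add_mem' := by
    intro a b ha hb m hm
    rcases Finset.mem_union.mp (MvPolynomial.support_add hm) with h | h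
    · exact ha m h
    · exact hb m h
  zero_mem' := by intro m hm; simp at hm
  smul_mem' := by
    intro c p hp m hm
    exact hp m (MvPolynomial.support_smul hm)

lemma natDegree_lt_of_degree_lt {F : Type*} [Semiring F] {Q : Polynomial F} {n : ℕ}
    (hn : 0 < n) (h : Q.degree < (n : WithBot ℕ)) : Q.natDegree < n := by
  rcases eq_or_ne Q 0 with rfl | h0
  · simpa using hn
  · exact (Polynomial.natDegree_lt_iff_degree_lt h0).mpr h

lemma eq_single2 {d : ℕ} {m : Fin 3 →₀ ℕ} (hsum : m 0 + m 1 + m 2 = d) (h0 : m 0 = 0)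
    (h1 : m 1 = 0) : m = Finsupp.single 2 d := by
  apply finsupp_ext3
  · rw [Finsupp.single_eq_of_ne (by decide)]; exact h0
  · rw [Finsupp.single_eq_of_ne (by decide)]; exact h1
  · rw [Finsupp.single_eq_same]; omega

lemma key {F : Type*} [Field F] [Fintype F] {q d : ℕ} (hq : Fintype.card F = q)
    (p : MvPolynomial (Fin 3) F) (hsupp : ∀ m ∈ p.support, Cond q d m)
    (hev : ∀ v : Fin 3 → F, v ∈ stdRep F → eval v p = 0) : p = 0 := by
  classical
  have hq2 : 2 ≤ q := hq ▸ Fintype.one_lt_card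
  have mem1 : ∀ y z : F, (![1, y, z]) ∈ stdRep F := fun y z => Or.inl (by simp)
  have mem2 : ∀ z : F, (![0, 1, z]) ∈ stdRep F := fun z => Or.inr (Or.inl ⟨by simp, by simp⟩)
  have mem3 : (![0, 0, 1] : Fin 3 → F) ∈ stdRep F :=
    Or.inr (Or.inr ⟨by simp, by simp, by simp⟩)
  -- Step A : the coefficient of X2^d vanishes
  have hA : coeff (Finsupp.single 2 d) p = 0 := by
    have h0 := hev _ mem3
    rw [eval_eq'] at h0
    have hsum : ∑ m ∈ p.support, coeff m p * ∏ i, (![0,0,1] : Fin 3 → F) i ^ m i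
        = coeff (Finsupp.single 2 d) p := by
      rw [Finset.sum_eq_single (Finsupp.single 2 d)]
      · rw [Fin.prod_univ_three]
        simp [Finsupp.single_apply]
      · intro m hm hne
        have hc := (hsupp m hm).1
        have h012 : 0 < m 0 ∨ 0 < m 1 := by
          by_contra hcon
          push_neg at hcon
          exact hne (eq_single2 hc (by omega) (by omega))
        rw [Fin.prod_univ_three]
        rcases h012 with h' | h'
        · simp [zero_pow (by omega : m 0 ≠ 0)]
        · simp [zero_pow (by omega : m 1 ≠ 0)]
      · intro h
        rw [MvPolynomial.notMem_support_iff.mp h, zero_mul]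
    rw [hsum] at h0
    exact h0
  have hns : Finsupp.single 2 d ∉ p.support := fun h => MvPolynomial.mem_support_iff.mp h hA
  -- Step B : every monomial in the support has positive first exponent
  have hB : ∀ m ∈ p.support, 0 < m 0 := by
    by_contra hcon
    push_neg at hcon
    obtain ⟨m₀, hm₀s, hm₀⟩ := hcon
    have hm₀0 : m₀ 0 = 0 := by omega
    set Q : Polynomial F := ∑ m ∈ p.support.filter (fun m => m 0 = 0),
      Polynomial.C (coeff m p) * Polynomial.X ^ (m 2) with hQ
    have hfb : ∀ m ∈ p.support.filter (fun m => m 0 = 0), m 2 ≤ q - 1 := by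
      intro m hm
      obtain ⟨hms, hm0⟩ := Finset.mem_filter.mp hm
      rcases Nat.eq_zero_or_pos (m 1) with h1 | h1
      · exact absurd (eq_single2 (hsupp m hms).1 hm0 h1 ▸ hms) hns
      · exact (hsupp m hms).2.2 hm0 h1
    have hdeg : Q.natDegree < q := by
      apply natDegree_lt_of_degree_lt (by omega : 0 < q)
      apply lt_of_le_of_lt (Polynomial.degree_sum_le _ _)
      rw [Finset.sup_lt_iff (by exact_mod_cast WithBot.bot_lt_coe q)]
      intro m hm
      exact lt_of_le_of_lt (Polynomial.degree_C_mul_X_pow_le _ _)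
        (by exact_mod_cast (by have := hfb m hm; omega : m 2 < q))
    have hQz : ∀ z : F, Q.eval z = 0 := by
      intro z
      have h0 := hev _ (mem2 z)
      rw [eval_eq'] at h0
      rw [← h0, hQ, Polynomial.eval_finset_sum, Finset.sum_filter]
      apply Finset.sum_congr rfl
      intro m hm
      rw [Fin.prod_univ_three]
      by_cases h0' : m 0 = 0
      · simp [h0']
      · simp [h0', zero_pow h0']
    have hQ0 : Q = 0 := Polynomial.eq_zero_of_natDegree_lt_card_of_eval_eq_zero Q
      Function.injective_id (fun z => hQz z) (by rw [hq]; exact hdeg)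
    have hcoeff : coeff m₀ p = Q.coeff (m₀ 2) := by
      rw [hQ, Polynomial.finset_sum_coeff, Finset.sum_eq_single m₀]
      · simp [Polynomial.coeff_C_mul, Polynomial.coeff_X_pow]
      · intro m hm hne
        have hm2 : m₀ 2 ≠ m 2 := by
          intro h2
          obtain ⟨hms, hm0⟩ := Finset.mem_filter.mp hm
          exact hne (finsupp_ext3 (by omega)
            (by have := (hsupp m hms).1; have := (hsupp m₀ hm₀s).1; omega) h2.symm)
        simp [Polynomial.coeff_C_mul, Polynomial.coeff_X_pow, hm2]
      · intro h
        exact absurd (Finset.mem_filter.mpr ⟨hm₀s, hm₀0⟩) h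
    rw [hQ0, Polynomial.coeff_zero] at hcoeff
    exact MvPolynomial.mem_support_iff.mp hm₀s hcoeff
  -- Step C
  rw [MvPolynomial.eq_zero_iff]
  intro m₀
  by_contra hne0
  have hm₀s : m₀ ∈ p.support := MvPolynomial.mem_support_iff.mpr hne0
  have hbounds : ∀ m ∈ p.support, m 1 ≤ q - 1 ∧ m 2 ≤ q - 1 :=
    fun m hm => (hsupp m hm).2.1 (hB m hm)
  have hTz : ∀ z : F, (∑ m ∈ p.support,
      Polynomial.C (coeff m p * z ^ m 2) * Polynomial.X ^ (m 1)) = 0 := by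
    intro z
    apply Polynomial.eq_zero_of_natDegree_lt_card_of_eval_eq_zero _
      Function.injective_id
    · intro y
      have h0 := hev _ (mem1 y z)
      rw [eval_eq'] at h0
      rw [Polynomial.eval_finset_sum, ← h0]
      apply Finset.sum_congr rfl
      intro m hm
      rw [Fin.prod_univ_three]
      simp only [Polynomial.eval_mul, Polynomial.eval_C, Polynomial.eval_pow,
        Polynomial.eval_X, Matrix.cons_val_zero, Matrix.cons_val_one, Matrix.head_cons,
        Matrix.cons_val_two, Matrix.tail_cons, id_eq, one_pow]
      ring
    · rw [hq]
      apply natDegree_lt_of_degree_lt (by omega : 0 < q)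
      apply lt_of_le_of_lt (Polynomial.degree_sum_le _ _)
      rw [Finset.sup_lt_iff (by exact_mod_cast WithBot.bot_lt_coe q)]
      intro m hm
      exact lt_of_le_of_lt (Polynomial.degree_C_mul_X_pow_le _ _)
        (by exact_mod_cast (by have := (hbounds m hm).1; omega : m 1 < q))
  set Q2 : Polynomial F := ∑ m ∈ p.support.filter (fun m => m₀ 1 = m 1),
    Polynomial.C (coeff m p) * Polynomial.X ^ (m 2) with hQ2
  have hQ2z : ∀ z : F, Q2.eval z = 0 := by
    intro z
    have h := congrArg (fun P => Polynomial.coeff P (m₀ 1)) (hTz z)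
    simp only [Polynomial.coeff_zero] at h
    rw [Polynomial.finset_sum_coeff] at h
    rw [← h, hQ2, Polynomial.eval_finset_sum, Finset.sum_filter]
    apply Finset.sum_congr rfl
    intro m hm
    simp only [Polynomial.coeff_C_mul, Polynomial.coeff_X_pow, Polynomial.eval_mul,
      Polynomial.eval_C, Polynomial.eval_pow, Polynomial.eval_X]
    by_cases h1 : m₀ 1 = m 1
    · simp [h1]
    · simp [h1]
  have hQ20 : Q2 = 0 := Polynomial.eq_zero_of_natDegree_lt_card_of_eval_eq_zero Q2
    Function.injective_id (fun z => hQ2z z) (by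
      rw [hq]
      apply natDegree_lt_of_degree_lt (by omega : 0 < q)
      rw [hQ2]
      apply lt_of_le_of_lt (Polynomial.degree_sum_le _ _)
      rw [Finset.sup_lt_iff (by exact_mod_cast WithBot.bot_lt_coe q)]
      intro m hm
      exact lt_of_le_of_lt (Polynomial.degree_C_mul_X_pow_le _ _)
        (by exact_mod_cast (by have := (hbounds m (Finset.mem_filter.mp hm).1).2; omega
          : m 2 < q)))
  have hcoeff : coeff m₀ p = Q2.coeff (m₀ 2) := by
    rw [hQ2, Polynomial.finset_sum_coeff, Finset.sum_eq_single m₀]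
    · simp [Polynomial.coeff_C_mul, Polynomial.coeff_X_pow]
    · intro m hm hne
      have hm2 : m₀ 2 ≠ m 2 := by
        intro h2
        obtain ⟨hms, hm1⟩ := Finset.mem_filter.mp hm
        exact hne (finsupp_ext3
          (by have := (hsupp m hms).1; have := (hsupp m₀ hm₀s).1; omega) hm1.symm h2.symm)
      simp [Polynomial.coeff_C_mul, Polynomial.coeff_X_pow, hm2]
    · intro h
      exact absurd (Finset.mem_filter.mpr ⟨hm₀s, (rfl : m₀ 1 = m₀ 1)⟩) h
  rw [hQ20, Polynomial.coeff_zero] at hcoeff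
  exact hne0 hcoeff

end PRMaux

namespace PRMaux

lemma A_structure {F : Type*} [Field F] {q d : ℕ} {M : MvPolynomial (Fin 3) F}
    (hM : M ∈ A1 F q d ∪ A2 F q d ∪ A3 F d) :
    ∃ m : Fin 3 →₀ ℕ, M = monomial m 1 ∧ Cond q d m := by
  rcases hM with (⟨a0, a1, a2, h1, h2, h3, h4, rfl⟩ | ⟨a1, a2, h1, h2, h3, rfl⟩) | hM
  · refine ⟨_, XXX_eq_monomial a0 a1 a2, ?_⟩
    simp only [Cond, triple_apply0, triple_apply1, triple_apply2]
    omega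
  · refine ⟨Finsupp.single 0 0 + Finsupp.single 1 a1 + Finsupp.single 2 a2, ?_, ?_⟩
    · rw [← XXX_eq_monomial 0 a1 a2, pow_zero, one_mul]
    · simp only [Cond, triple_apply0, triple_apply1, triple_apply2]
      omega
  · obtain rfl : M = X 2 ^ d := hM
    refine ⟨Finsupp.single 2 d, X_pow_eq_monomial, ?_⟩
    have e0 : (Finsupp.single (2 : Fin 3) d) 0 = 0 := Finsupp.single_eq_of_ne (by decide)
    have e1 : (Finsupp.single (2 : Fin 3) d) 1 = 0 := Finsupp.single_eq_of_ne (by decide)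
    have e2 : (Finsupp.single (2 : Fin 3) d) 2 = d := Finsupp.single_eq_same
    simp only [Cond, e0, e1, e2]
    omega

lemma exists_target {F : Type*} [Field F] [Fintype F] {q d : ℕ} (hq : Fintype.card F = q)
    (m : Fin 3 →₀ ℕ) (hm : m 0 + m 1 + m 2 = d) :
    ∃ M ∈ A1 F q d ∪ A2 F q d ∪ A3 F d, ev F (monomial m 1) = ev F M := by
  have hq2 : 2 ≤ q := hq ▸ Fintype.one_lt_card
  rcases Nat.eq_zero_or_pos (m 0) with h0 | h0
  · rcases Nat.eq_zero_or_pos (m 1) with h1 | h1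
    · refine ⟨X 2 ^ d, Or.inr (Set.mem_singleton _), ?_⟩
      rw [eq_single2 hm h0 h1, X_pow_eq_monomial]
    · -- A2 case
      have hr2le := red_le q (m 2)
      have hr2b := red_le_sub_one hq2 (m 2)
      refine ⟨X 1 ^ (d - red q (m 2)) * X 2 ^ (red q (m 2)),
        Or.inl (Or.inr ⟨d - red q (m 2), red q (m 2), by omega, by omega, hr2b, rfl⟩), ?_⟩
      funext v
      rw [ev_apply, ev_apply, eval_monomial_three]
      have hrhs : eval (v : Fin 3 → F) (X 1 ^ (d - red q (m 2)) * X 2 ^ (red q (m 2)))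
          = (v : Fin 3 → F) 1 ^ (d - red q (m 2)) * (v : Fin 3 → F) 2 ^ (red q (m 2)) := by
        simp
      have h2eq : (v : Fin 3 → F) 2 ^ m 2 = (v : Fin 3 → F) 2 ^ red q (m 2) :=
        pow_red hq hr2le (red_dvd q (m 2)) red_eq_zero _
      have h1eq : (v : Fin 3 → F) 1 ^ (d - red q (m 2)) = (v : Fin 3 → F) 1 ^ m 1 :=
        pow_red hq (by omega) (by
          obtain ⟨k, hk⟩ := red_dvd q (m 2)
          exact ⟨k, by omega⟩) (fun h => absurd h (by omega)) _
      rw [hrhs, h0, pow_zero, one_mul, h1eq, h2eq]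
  · -- A1 case
    have hr1le := red_le q (m 1)
    have hr2le := red_le q (m 2)
    have hr1b := red_le_sub_one hq2 (m 1)
    have hr2b := red_le_sub_one hq2 (m 2)
    refine ⟨X 0 ^ (d - red q (m 1) - red q (m 2)) * X 1 ^ (red q (m 1)) * X 2 ^ (red q (m 2)),
      Or.inl (Or.inl ⟨d - red q (m 1) - red q (m 2), red q (m 1), red q (m 2),
        by omega, by omega, hr1b, hr2b, rfl⟩), ?_⟩
    funext v
    rw [ev_apply, ev_apply, eval_monomial_three]
    have hrhs : eval (v : Fin 3 → F)
        (X 0 ^ (d - red q (m 1) - red q (m 2)) * X 1 ^ (red q (m 1)) * X 2 ^ (red q (m 2)))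
        = (v : Fin 3 → F) 0 ^ (d - red q (m 1) - red q (m 2))
          * (v : Fin 3 → F) 1 ^ (red q (m 1)) * (v : Fin 3 → F) 2 ^ (red q (m 2)) := by
      simp
    have h0eq : (v : Fin 3 → F) 0 ^ (d - red q (m 1) - red q (m 2))
        = (v : Fin 3 → F) 0 ^ m 0 :=
      pow_red hq (by omega) (by
        obtain ⟨k1, hk1⟩ := red_dvd q (m 1)
        obtain ⟨k2, hk2⟩ := red_dvd q (m 2)
        refine ⟨k1 + k2, ?_⟩
        rw [Nat.mul_add]
        omega) (fun h => absurd h (by omega)) _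
    have h1eq : (v : Fin 3 → F) 1 ^ m 1 = (v : Fin 3 → F) 1 ^ red q (m 1) :=
      pow_red hq hr1le (red_dvd q (m 1)) red_eq_zero _
    have h2eq : (v : Fin 3 → F) 2 ^ m 2 = (v : Fin 3 → F) 2 ^ red q (m 2) :=
      pow_red hq hr2le (red_dvd q (m 2)) red_eq_zero _
    rw [hrhs, h0eq, h1eq, h2eq]

end PRMaux

open PRMaux

/-- For `1 ≤ d ≤ 2(q−1)`, the evaluations of the monomials in
`A^d = A₁^d ∪ A₂^d ∪ A₃^d` form a basis of `PRM_d(q,2)`; in particular its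
dimension is `|A^d|`. -/
theorem stmt0 {F : Type*} [Field F] [Fintype F] (q d : ℕ) (hq : Fintype.card F = q)
    (hd1 : 1 ≤ d) (hd2 : d ≤ 2 * (q - 1)) :
    LinearIndependent F
      (fun M : (A1 F q d ∪ A2 F q d ∪ A3 F d : Set (MvPolynomial (Fin 3) F)) =>
        ev F (M : MvPolynomial (Fin 3) F)) ∧
    Submodule.span F (ev F '' (A1 F q d ∪ A2 F q d ∪ A3 F d)) = PRM F d ∧
    Module.finrank F (PRM F d) = (A1 F q d ∪ A2 F q d ∪ A3 F d).ncard := by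
  classical
  set A : Set (MvPolynomial (Fin 3) F) := A1 F q d ∪ A2 F q d ∪ A3 F d with hA
  have hstruct : ∀ M ∈ A, ∃ m : Fin 3 →₀ ℕ, M = monomial m 1 ∧ Cond q d m :=
    fun M hM => A_structure hM
  have hAcond : A ⊆ (condSub F q d : Set (MvPolynomial (Fin 3) F)) := by
    intro M hM
    obtain ⟨m, rfl, hc⟩ := hstruct M hM
    intro m' hm'
    rw [MvPolynomial.support_monomial, if_neg one_ne_zero] at hm'
    rw [Finset.mem_singleton.mp hm']
    exact hc
  have hli : LinearIndependent F (fun M : A => (M : MvPolynomial (Fin 3) F)) := by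
    have hb : LinearIndependent F
        (fun x : Set.range (fun m : Fin 3 →₀ ℕ => (monomial m (1 : F))) =>
          (x : MvPolynomial (Fin 3) F)) := by
      have h := (linearIndepOn_id_range_iff (basisMonomials (Fin 3) F).injective).mpr
        (basisMonomials (Fin 3) F).linearIndependent
      rwa [coe_basisMonomials] at h
    exact LinearIndepOn.mono (v := id) hb (fun M hM => by
      obtain ⟨m, hMe, _⟩ := hstruct M hM
      exact ⟨m, hMe.symm⟩)
  have hdisj : Disjoint (Submodule.span F A) (LinearMap.ker (ev F)) := by
    rw [Submodule.disjoint_def]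
    intro p hpA hpk
    apply key hq p ((Submodule.span_le.mpr hAcond) hpA)
    intro v hv
    have h1 := congrFun (LinearMap.mem_ker.mp hpk) ⟨v, hv⟩
    rwa [ev_apply] at h1
  have hli2 : LinearIndependent F (fun M : A => ev F (M : MvPolynomial (Fin 3) F)) := by
    have h := hli.map (f := ev F) (by rwa [Subtype.range_coe])
    exact h
  have hspan : Submodule.span F (ev F '' A) = PRM F d := by
    apply le_antisymm
    · rw [Submodule.span_le]
      rintro _ ⟨M, hM, rfl⟩
      obtain ⟨m, rfl, hc⟩ := hstruct M hM
      exact ⟨monomial m 1, (mem_homogeneousSubmodule _ _).mpr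
        (isHomogeneous_monomial _ (by rw [degree_three]; exact hc.1)), rfl⟩
    · rintro _ ⟨p, hp, rfl⟩
      rw [← MvPolynomial.support_sum_monomial_coeff p, map_sum]
      apply Submodule.sum_mem
      intro m hm
      have hh : p.IsHomogeneous d := (mem_homogeneousSubmodule _ _).mp hp
      have hmd : m 0 + m 1 + m 2 = d := by
        rw [← degree_three, Finsupp.degree_eq_weight_one]
        exact hh (MvPolynomial.mem_support_iff.mp hm)
      obtain ⟨M, hM, hMe⟩ := exists_target hq m hmd
      have hsmul : monomial m (coeff m p) = (coeff m p) • monomial m (1 : F) := by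
        rw [smul_monomial, smul_eq_mul, mul_one]
      rw [hsmul, map_smul, hMe]
      exact Submodule.smul_mem _ _ (Submodule.subset_span ⟨M, hM, rfl⟩)
  refine ⟨hli2, hspan, ?_⟩
  have hAfin : A.Finite := by
    have h1 : A1 F q d ⊆ (fun p : ℕ × ℕ =>
        (X 0 ^ (d - p.1 - p.2) * X 1 ^ p.1 * X 2 ^ p.2 : MvPolynomial (Fin 3) F)) ''
        (Set.Iic d ×ˢ Set.Iic d) := by
      rintro M ⟨a0, a1, a2, h1, h2, h3, h4, rfl⟩
      refine ⟨(a1, a2), ⟨Set.mem_Iic.mpr (by omega), Set.mem_Iic.mpr (by omega)⟩, ?_⟩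
      simp only
      rw [show d - a1 - a2 = a0 by omega]
    have h2 : A2 F q d ⊆ (fun b : ℕ =>
        (X 1 ^ (d - b) * X 2 ^ b : MvPolynomial (Fin 3) F)) '' (Set.Iic d) := by
      rintro M ⟨a1, a2, h1, h2, h3, rfl⟩
      refine ⟨a2, Set.mem_Iic.mpr (by omega), ?_⟩
      simp only
      rw [show d - a2 = a1 by omega]
    exact (((((Set.finite_Iic d).prod (Set.finite_Iic d)).image _).subset h1).union
      (((Set.finite_Iic d).image _).subset h2)).union (Set.finite_singleton _)
  have hevfin : (ev F '' A).Finite := hAfin.image _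
  have hinj : Set.InjOn (ev F) A := by
    rw [Set.injOn_iff_injective]
    exact hli2.injective
  rw [← hspan]
  letI := hevfin.fintype
  rw [finrank_span_set_eq_card (LinearIndepOn.id_image (v := ev F) hli2), ← Set.ncard_eq_toFinset_card',
    Set.ncard_image_of_injOn hinj]
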